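/- Let k ≥ 4 and set q = 2^{k−2}. Define matrices A_{2^j} and B_{2^j} of size 2^j × 2^j for 0 ≤ j ≤ k−2 recursively by A_1 = (1), B_1 = (−1), A_{2^{j+1}} = [[A_{2^j}, 𝒢_{2^{k−2},2^j}],[𝒢_{2^{k−2},2^j}, A_{2^j}]] and B_{2^{j+1}} = [[𝒢̄_{2^{k−2},2^j}, B_{2^j}],[B_{2^j}, 𝒢̄_{2^{k−2},2^j}]] (in 2×2 block form). Then, writing G = 𝒢_{2^{k−2}}, A = A_{2^{k−2}} and B = B_{2^{k−2}}, the game matrix 𝒢_{2^k} equals the 4×4 block matrix (with blocks of size q × q) [[A,G,G,B],[G,A,B,G],[G,B,A,G],[B,G,G,A]]. -/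
import Mathlib


noncomputable def Ssum (k i j : ℕ) : ℝ :=
  ∑ s ∈ Finset.range k, (if Nat.testBit i s = Nat.testBit j s then (1:ℝ) else -1)


/-- `tilde k i` is the vector `ĩ_k ∈ {1,−1}^k`: the k-digit binary representation of
`i` (most significant digit first) with digit 0 replaced by 1 and digit 1 by −1. -/
def tilde (k : ℕ) (i : Fin (2 ^ k)) : Fin k → ℝ :=
  fun t => if Nat.testBit i.val (k - 1 - t.val) then -1 else 1

/-- The game matrix `𝒢_{2^k}` with entries
`(𝒢_{2^k})_{i,j} = (1, ĩ_k) ⋆ (−1, j̃_k) = sign(ĩ_k · j̃_k − 1)`. -/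
noncomputable def gameMatrix (k : ℕ) : Matrix (Fin (2 ^ k)) (Fin (2 ^ k)) ℝ :=
  Matrix.of fun i j => Real.sign ((∑ t, tilde k i t * tilde k j t) - 1)

/-- `𝒢_{2^k,x}`: the top-left `x × x` corner submatrix of `𝒢_{2^k}`. -/
noncomputable def cornerTL (k x : ℕ) (h : x ≤ 2 ^ k) : Matrix (Fin x) (Fin x) ℝ :=
  Matrix.of fun i j =>
    gameMatrix k ⟨i.val, lt_of_lt_of_le i.isLt h⟩ ⟨j.val, lt_of_lt_of_le j.isLt h⟩

/-- `𝒢̄_{2^k,x}`: the top-right `x × x` corner submatrix of `𝒢_{2^k}`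
(rows `1,…,x`, columns `2^k−x+1,…,2^k`). -/
noncomputable def cornerTR (k x : ℕ) (h : x ≤ 2 ^ k) : Matrix (Fin x) (Fin x) ℝ :=
  Matrix.of fun i j =>
    gameMatrix k ⟨i.val, lt_of_lt_of_le i.isLt h⟩
      ⟨2 ^ k - x + j.val, by omega⟩

/-- The canonical equivalence `Fin (2^m) ⊕ Fin (2^m) ≃ Fin (2^(m+1))`. -/
def finPowEquiv (m : ℕ) : Fin (2 ^ m) ⊕ Fin (2 ^ m) ≃ Fin (2 ^ (m + 1)) :=
  finSumFinEquiv.trans (finCongr (by rw [pow_succ, mul_two]))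

/-- The `2 × 2` block matrix `[[W,X],[Y,Z]]` with blocks of size `2^m × 2^m`,
as a `2^(m+1) × 2^(m+1)` matrix. -/
noncomputable def blk {m : ℕ} (W X Y Z : Matrix (Fin (2 ^ m)) (Fin (2 ^ m)) ℝ) :
    Matrix (Fin (2 ^ (m + 1))) (Fin (2 ^ (m + 1))) ℝ :=
  Matrix.reindex (finPowEquiv m) (finPowEquiv m) (Matrix.fromBlocks W X Y Z)

/-- The Hadamard matrix `H_m`, defined recursively by `H_0 = (1)` and
`H_{m+1} = (1/√2)[[H_m, H_m],[H_m, −H_m]]`. -/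
noncomputable def Had : (m : ℕ) → Matrix (Fin (2 ^ m)) (Fin (2 ^ m)) ℝ
  | 0 => Matrix.of fun _ _ => 1
  | m + 1 => (Real.sqrt 2)⁻¹ • blk (Had m) (Had m) (Had m) (-(Had m))

/-- The matrices `A_{2^j}` (relative to base size `2^n`, `n = k − 2`) defined by
`A_1 = (1)` and `A_{2^{j+1}} = [[A_{2^j}, 𝒢_{2^n,2^j}],[𝒢_{2^n,2^j}, A_{2^j}]]`. -/
noncomputable def Amat (n : ℕ) : (j : ℕ) → 2 ^ j ≤ 2 ^ n → Matrix (Fin (2 ^ j)) (Fin (2 ^ j)) ℝ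
  | 0, _ => Matrix.of fun _ _ => 1
  | j + 1, h =>
      blk (Amat n j ((Nat.pow_le_pow_right (by norm_num) (Nat.le_succ j)).trans h))
        (cornerTL n (2 ^ j) ((Nat.pow_le_pow_right (by norm_num) (Nat.le_succ j)).trans h))
        (cornerTL n (2 ^ j) ((Nat.pow_le_pow_right (by norm_num) (Nat.le_succ j)).trans h))
        (Amat n j ((Nat.pow_le_pow_right (by norm_num) (Nat.le_succ j)).trans h))

/-- The matrices `B_{2^j}` (relative to base size `2^n`, `n = k − 2`) defined by
`B_1 = (−1)` and `B_{2^{j+1}} = [[𝒢̄_{2^n,2^j}, B_{2^j}],[B_{2^j}, 𝒢̄_{2^n,2^j}]]`. -/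
noncomputable def Bmat (n : ℕ) : (j : ℕ) → 2 ^ j ≤ 2 ^ n → Matrix (Fin (2 ^ j)) (Fin (2 ^ j)) ℝ
  | 0, _ => Matrix.of fun _ _ => -1
  | j + 1, h =>
      blk (cornerTR n (2 ^ j) ((Nat.pow_le_pow_right (by norm_num) (Nat.le_succ j)).trans h))
        (Bmat n j ((Nat.pow_le_pow_right (by norm_num) (Nat.le_succ j)).trans h))
        (Bmat n j ((Nat.pow_le_pow_right (by norm_num) (Nat.le_succ j)).trans h))
        (cornerTR n (2 ^ j) ((Nat.pow_le_pow_right (by norm_num) (Nat.le_succ j)).trans h))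

lemma sum_tilde (k : ℕ) (i j : Fin (2 ^ k)) :
    ∑ t, tilde k i t * tilde k j t = Ssum k i.val j.val := by
  have h1 : ∀ t : Fin k, tilde k i t * tilde k j t =
      (if Nat.testBit i.val (k - 1 - t.val) = Nat.testBit j.val (k - 1 - t.val)
        then (1:ℝ) else -1) := by
    intro t
    unfold tilde
    rcases Nat.testBit i.val (k - 1 - t.val) <;>
      rcases Nat.testBit j.val (k - 1 - t.val) <;> norm_num
  simp only [h1]
  rw [Ssum, ← Fin.sum_univ_eq_sum_range]
  refine Fintype.sum_equiv Fin.revPerm _ _ (fun t => ?_)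
  have ht := t.isLt
  have : k - 1 - t.val = (Fin.revPerm t).val := by
    simp only [Fin.revPerm_apply, Fin.val_rev]; omega
  rw [this]

lemma gm_apply (k : ℕ) (i j : Fin (2 ^ k)) :
    gameMatrix k i j = Real.sign (Ssum k i.val j.val - 1) := by
  rw [gameMatrix, Matrix.of_apply, sum_tilde]

lemma Ssum_comm (k i j : ℕ) : Ssum k i j = Ssum k j i := by
  unfold Ssum
  refine Finset.sum_congr rfl fun s _ => ?_
  simp only [eq_comm]

lemma Ssum_split {K n : ℕ} (hK : K ≤ n) {a b : ℕ} (c d : ℕ) (ha : a < 2 ^ K) (hb : b < 2 ^ K) :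
    Ssum n (2 ^ K * c + a) (2 ^ K * d + b) = Ssum K a b + Ssum (n - K) c d := by
  unfold Ssum
  rw [← Finset.sum_range_add_sum_Ico _ hK]
  congr 1
  · refine Finset.sum_congr rfl fun s hs => ?_
    rw [Nat.testBit_two_pow_mul_add c ha s, Nat.testBit_two_pow_mul_add d hb s,
      if_pos (Finset.mem_range.mp hs), if_pos (Finset.mem_range.mp hs)]
  · rw [Finset.sum_Ico_eq_sum_range]
    refine Finset.sum_congr rfl fun s _ => ?_
    rw [Nat.testBit_two_pow_mul_add c ha (K + s), Nat.testBit_two_pow_mul_add d hb (K + s)]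
    simp

lemma Ssum_self (k c : ℕ) : Ssum k c c = k := by simp [Ssum]

lemma Ssum_zero_one {k : ℕ} (hk : 1 ≤ k) : Ssum k 0 1 = (k : ℝ) - 2 := by
  obtain ⟨k', rfl⟩ : ∃ k', k = k' + 1 := ⟨k - 1, by omega⟩
  unfold Ssum
  rw [Finset.sum_range_succ']
  have h0 : ∀ s : ℕ, Nat.testBit 0 s = Nat.testBit 1 s ↔ ¬ (s = 0) := by
    intro s
    cases s <;> simp [Nat.testBit_succ]
  simp only [Finset.sum_congr rfl (fun s _ => if_pos ((h0 (s+1)).mpr (by omega)))]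
  rw [if_neg (by rw [h0]; simp)]
  simp; push_cast; ring

lemma Ssum_zero_allones (k : ℕ) : Ssum k 0 (2 ^ k - 1) = -(k : ℝ) := by
  unfold Ssum
  rw [Finset.sum_congr rfl (fun s hs => if_neg (by
    simp [Nat.testBit_two_pow_sub_one, Finset.mem_range.mp hs]))]
  simp

lemma Ssum_low {j n a b : ℕ} (hj : j ≤ n) (ha : a < 2 ^ j) (hb : b < 2 ^ j) :
    Ssum n a b = Ssum j a b + ((n : ℝ) - j) := by
  have h := Ssum_split hj 0 0 ha hb
  simp only [Nat.mul_zero, Nat.zero_add, Ssum_self] at h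
  rw [h, Nat.cast_sub hj]

lemma Ssum_hi_one {j n a b : ℕ} (hj : j < n) (ha : a < 2 ^ j) (hb : b < 2 ^ j) :
    Ssum n a (2 ^ j + b) = Ssum j a b + ((n : ℝ) - j - 2) := by
  have h := Ssum_split (le_of_lt hj) 0 1 ha hb
  rw [Nat.mul_zero, Nat.zero_add, Nat.mul_one, Ssum_zero_one (by omega)] at h
  rw [h, Nat.cast_sub (le_of_lt hj)]

lemma Ssum_hi_both {j n a b : ℕ} (hj : j ≤ n) (ha : a < 2 ^ j) (hb : b < 2 ^ j) :
    Ssum n (2 ^ j + a) (2 ^ j + b) = Ssum j a b + ((n : ℝ) - j) := by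
  have h := Ssum_split hj 1 1 ha hb
  rw [Nat.mul_one, Ssum_self, Nat.cast_sub hj] at h
  exact h

lemma Ssum_TR {j n a b : ℕ} (hj : j ≤ n) (ha : a < 2 ^ j) (hb : b < 2 ^ j) :
    Ssum n a (2 ^ n - 2 ^ j + b) = Ssum j a b - ((n : ℝ) - j) := by
  have hp : 2 ^ j * (2 ^ (n - j) - 1) = 2 ^ n - 2 ^ j := by
    rw [Nat.mul_sub, mul_one, ← pow_add, Nat.add_sub_cancel' hj]
  have h := Ssum_split hj 0 (2 ^ (n - j) - 1) ha hb
  rw [Nat.mul_zero, Nat.zero_add, hp, Ssum_zero_allones, Nat.cast_sub hj] at h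
  rw [h]; ring


lemma blk_apply {m : ℕ} (W X Y Z : Matrix (Fin (2 ^ m)) (Fin (2 ^ m)) ℝ)
    (s t : Fin (2 ^ m) ⊕ Fin (2 ^ m)) :
    blk W X Y Z (finPowEquiv m s) (finPowEquiv m t) = Matrix.fromBlocks W X Y Z s t := by
  simp [blk]

lemma finPowEquiv_inl_val {m : ℕ} (a : Fin (2 ^ m)) :
    ((finPowEquiv m (Sum.inl a)) : ℕ) = a.val := rfl

lemma finPowEquiv_inr_val {m : ℕ} (a : Fin (2 ^ m)) :
    ((finPowEquiv m (Sum.inr a)) : ℕ) = 2 ^ m + a.val := rfl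

lemma cornerTL_apply (k x : ℕ) (h : x ≤ 2 ^ k) (a b : Fin x) :
    cornerTL k x h a b = Real.sign (Ssum k a.val b.val - 1) := by
  rw [cornerTL, Matrix.of_apply, gm_apply]

lemma cornerTR_apply (k x : ℕ) (h : x ≤ 2 ^ k) (a b : Fin x) :
    cornerTR k x h a b = Real.sign (Ssum k a.val (2 ^ k - x + b.val) - 1) := by
  rw [cornerTR, Matrix.of_apply, gm_apply]

lemma jlen {j n : ℕ} (h : 2 ^ (j + 1) ≤ 2 ^ n) : j < n := by
  have := (Nat.pow_le_pow_iff_right (by norm_num : 1 < 2)).mp h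
  omega

lemma Amat_apply (n : ℕ) (j : ℕ) (h : 2 ^ j ≤ 2 ^ n) (a b : Fin (2 ^ j)) :
    Amat n j h a b = Real.sign (Ssum n a.val b.val + 1) := by
  induction j with
  | zero =>
      have ha : a.val = 0 := by have := a.isLt; omega
      have hb : b.val = 0 := by have := b.isLt; omega
      rw [Amat, Matrix.of_apply, ha, hb, Ssum_self, Real.sign_of_pos (by positivity)]
  | succ j ih =>
      have hj : j < n := jlen h
      have h' := (Nat.pow_le_pow_right (by norm_num : 1 ≤ 2) (Nat.le_succ j)).trans h
      obtain ⟨s, rfl⟩ := (finPowEquiv j).surjective a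
      obtain ⟨t, rfl⟩ := (finPowEquiv j).surjective b
      rw [Amat, blk_apply]
      cases s with
      | inl a =>
        cases t with
        | inl b =>
          rw [Matrix.fromBlocks_apply₁₁, ih h', finPowEquiv_inl_val, finPowEquiv_inl_val]
        | inr b =>
          rw [Matrix.fromBlocks_apply₁₂, cornerTL_apply, finPowEquiv_inl_val,
            finPowEquiv_inr_val]
          congr 1
          rw [Ssum_hi_one hj a.isLt b.isLt, Ssum_low (le_of_lt hj) a.isLt b.isLt]
          ring
      | inr a =>
        cases t with
        | inl b =>
          rw [Matrix.fromBlocks_apply₂₁, cornerTL_apply, finPowEquiv_inr_val,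
            finPowEquiv_inl_val]
          congr 1
          rw [Ssum_comm n (2 ^ j + a.val) b.val, Ssum_hi_one hj b.isLt a.isLt,
            Ssum_comm j b.val a.val, Ssum_low (le_of_lt hj) a.isLt b.isLt]
          ring
        | inr b =>
          rw [Matrix.fromBlocks_apply₂₂, ih h', finPowEquiv_inr_val, finPowEquiv_inr_val]
          congr 1
          rw [Ssum_hi_both (le_of_lt hj) a.isLt b.isLt, Ssum_low (le_of_lt hj) a.isLt b.isLt]

lemma Bmat_apply (n : ℕ) (j : ℕ) (h : 2 ^ j ≤ 2 ^ n) (a b : Fin (2 ^ j)) :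
    Bmat n j h a b = Real.sign (Ssum n a.val b.val + 2 * (j : ℝ) - 2 * n - 3) := by
  induction j with
  | zero =>
      have ha : a.val = 0 := by have := a.isLt; omega
      have hb : b.val = 0 := by have := b.isLt; omega
      rw [Bmat, Matrix.of_apply, ha, hb, Ssum_self,
        Real.sign_of_neg (by push_cast; linarith [Nat.cast_nonneg (α := ℝ) n])]
  | succ j ih =>
      have hj : j < n := jlen h
      have h' := (Nat.pow_le_pow_right (by norm_num : 1 ≤ 2) (Nat.le_succ j)).trans h
      obtain ⟨s, rfl⟩ := (finPowEquiv j).surjective a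
      obtain ⟨t, rfl⟩ := (finPowEquiv j).surjective b
      rw [Bmat, blk_apply]
      cases s with
      | inl a =>
        cases t with
        | inl b =>
          rw [Matrix.fromBlocks_apply₁₁, cornerTR_apply, finPowEquiv_inl_val,
            finPowEquiv_inl_val]
          congr 1
          rw [Ssum_TR (le_of_lt hj) a.isLt b.isLt, Ssum_low (le_of_lt hj) a.isLt b.isLt]
          push_cast; ring
        | inr b =>
          rw [Matrix.fromBlocks_apply₁₂, ih h', finPowEquiv_inl_val, finPowEquiv_inr_val]
          congr 1
          rw [Ssum_hi_one hj a.isLt b.isLt, Ssum_low (le_of_lt hj) a.isLt b.isLt]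
          push_cast; ring
      | inr a =>
        cases t with
        | inl b =>
          rw [Matrix.fromBlocks_apply₂₁, ih h', finPowEquiv_inr_val, finPowEquiv_inl_val]
          congr 1
          rw [Ssum_comm n (2 ^ j + a.val) b.val, Ssum_hi_one hj b.isLt a.isLt,
            Ssum_comm j b.val a.val, Ssum_low (le_of_lt hj) a.isLt b.isLt]
          push_cast; ring
        | inr b =>
          rw [Matrix.fromBlocks_apply₂₂, cornerTR_apply, finPowEquiv_inr_val,
            finPowEquiv_inr_val]
          congr 1
          rw [Ssum_TR (le_of_lt hj) a.isLt b.isLt, Ssum_hi_both (le_of_lt hj) a.isLt b.isLt]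
          push_cast; ring

lemma Ssum_two_split {M a b : ℕ} (c d : ℕ) (ha : a < 2 ^ M) (hb : b < 2 ^ M) :
    Ssum (M + 2) (2 ^ M * c + a) (2 ^ M * d + b) = Ssum M a b + Ssum 2 c d := by
  have h := Ssum_split (by omega : M ≤ M + 2) c d ha hb
  simpa using h

lemma Ssum2_00 : Ssum 2 0 0 = 2 := by
  by_cases h : True <;> · simp [Ssum, Finset.sum_range_succ] <;> norm_num [show Nat.testBit 1 1 = false from rfl, show Nat.testBit 2 1 = true from rfl, show Nat.testBit 3 1 = true from rfl]
lemma Ssum2_01 : Ssum 2 0 1 = 0 := by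
  by_cases h : True <;> · simp [Ssum, Finset.sum_range_succ] <;> norm_num [show Nat.testBit 1 1 = false from rfl, show Nat.testBit 2 1 = true from rfl, show Nat.testBit 3 1 = true from rfl]
lemma Ssum2_02 : Ssum 2 0 2 = 0 := by
  by_cases h : True <;> · simp [Ssum, Finset.sum_range_succ] <;> norm_num [show Nat.testBit 1 1 = false from rfl, show Nat.testBit 2 1 = true from rfl, show Nat.testBit 3 1 = true from rfl]
lemma Ssum2_03 : Ssum 2 0 3 = (-2) := by
  by_cases h : True <;> · simp [Ssum, Finset.sum_range_succ] <;> norm_num [show Nat.testBit 1 1 = false from rfl, show Nat.testBit 2 1 = true from rfl, show Nat.testBit 3 1 = true from rfl]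
lemma Ssum2_10 : Ssum 2 1 0 = 0 := by
  by_cases h : True <;> · simp [Ssum, Finset.sum_range_succ] <;> norm_num [show Nat.testBit 1 1 = false from rfl, show Nat.testBit 2 1 = true from rfl, show Nat.testBit 3 1 = true from rfl]
lemma Ssum2_11 : Ssum 2 1 1 = 2 := by
  by_cases h : True <;> · simp [Ssum, Finset.sum_range_succ] <;> norm_num [show Nat.testBit 1 1 = false from rfl, show Nat.testBit 2 1 = true from rfl, show Nat.testBit 3 1 = true from rfl]
lemma Ssum2_12 : Ssum 2 1 2 = (-2) := by
  by_cases h : True <;> · simp [Ssum, Finset.sum_range_succ] <;> norm_num [show Nat.testBit 1 1 = false from rfl, show Nat.testBit 2 1 = true from rfl, show Nat.testBit 3 1 = true from rfl]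
lemma Ssum2_13 : Ssum 2 1 3 = 0 := by
  by_cases h : True <;> · simp [Ssum, Finset.sum_range_succ] <;> norm_num [show Nat.testBit 1 1 = false from rfl, show Nat.testBit 2 1 = true from rfl, show Nat.testBit 3 1 = true from rfl]
lemma Ssum2_20 : Ssum 2 2 0 = 0 := by
  by_cases h : True <;> · simp [Ssum, Finset.sum_range_succ] <;> norm_num [show Nat.testBit 1 1 = false from rfl, show Nat.testBit 2 1 = true from rfl, show Nat.testBit 3 1 = true from rfl]
lemma Ssum2_21 : Ssum 2 2 1 = (-2) := by
  by_cases h : True <;> · simp [Ssum, Finset.sum_range_succ] <;> norm_num [show Nat.testBit 1 1 = false from rfl, show Nat.testBit 2 1 = true from rfl, show Nat.testBit 3 1 = true from rfl]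
lemma Ssum2_22 : Ssum 2 2 2 = 2 := by
  by_cases h : True <;> · simp [Ssum, Finset.sum_range_succ] <;> norm_num [show Nat.testBit 1 1 = false from rfl, show Nat.testBit 2 1 = true from rfl, show Nat.testBit 3 1 = true from rfl]
lemma Ssum2_23 : Ssum 2 2 3 = 0 := by
  by_cases h : True <;> · simp [Ssum, Finset.sum_range_succ] <;> norm_num [show Nat.testBit 1 1 = false from rfl, show Nat.testBit 2 1 = true from rfl, show Nat.testBit 3 1 = true from rfl]
lemma Ssum2_30 : Ssum 2 3 0 = (-2) := by
  by_cases h : True <;> · simp [Ssum, Finset.sum_range_succ] <;> norm_num [show Nat.testBit 1 1 = false from rfl, show Nat.testBit 2 1 = true from rfl, show Nat.testBit 3 1 = true from rfl]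
lemma Ssum2_31 : Ssum 2 3 1 = 0 := by
  by_cases h : True <;> · simp [Ssum, Finset.sum_range_succ] <;> norm_num [show Nat.testBit 1 1 = false from rfl, show Nat.testBit 2 1 = true from rfl, show Nat.testBit 3 1 = true from rfl]
lemma Ssum2_32 : Ssum 2 3 2 = 0 := by
  by_cases h : True <;> · simp [Ssum, Finset.sum_range_succ] <;> norm_num [show Nat.testBit 1 1 = false from rfl, show Nat.testBit 2 1 = true from rfl, show Nat.testBit 3 1 = true from rfl]
lemma Ssum2_33 : Ssum 2 3 3 = 2 := by
  by_cases h : True <;> · simp [Ssum, Finset.sum_range_succ] <;> norm_num [show Nat.testBit 1 1 = false from rfl, show Nat.testBit 2 1 = true from rfl, show Nat.testBit 3 1 = true from rfl]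

lemma quadA (M K : ℕ) (a b : Fin (2 ^ M)) (c d v1 v2 : ℕ) (hK : K = M + 2)
    (h1 : v1 = 2 ^ M * c + a.val) (h2 : v2 = 2 ^ M * d + b.val) (hcd : Ssum 2 c d = 2) :
    Real.sign (Ssum K v1 v2 - 1) = Amat M M le_rfl a b := by
  subst hK
  rw [h1, h2, Ssum_two_split c d a.isLt b.isLt, hcd, Amat_apply]
  congr 1; ring

lemma quadG (M K : ℕ) (a b : Fin (2 ^ M)) (c d v1 v2 : ℕ) (hK : K = M + 2)
    (h1 : v1 = 2 ^ M * c + a.val) (h2 : v2 = 2 ^ M * d + b.val) (hcd : Ssum 2 c d = 0) :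
    Real.sign (Ssum K v1 v2 - 1) = Real.sign (Ssum M a.val b.val - 1) := by
  subst hK
  rw [h1, h2, Ssum_two_split c d a.isLt b.isLt, hcd]
  congr 1; ring

lemma quadB (M K : ℕ) (a b : Fin (2 ^ M)) (c d v1 v2 : ℕ) (hK : K = M + 2)
    (h1 : v1 = 2 ^ M * c + a.val) (h2 : v2 = 2 ^ M * d + b.val) (hcd : Ssum 2 c d = -2) :
    Real.sign (Ssum K v1 v2 - 1) = Bmat M M le_rfl a b := by
  subst hK
  rw [h1, h2, Ssum_two_split c d a.isLt b.isLt, hcd, Bmat_apply]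
  congr 1; ring


/-- Let `k ≥ 4` (here `k = m + 4`) and `q = 2^{k−2}`. With
`G = 𝒢_{2^{k−2}}`, `A = A_{2^{k−2}}` and `B = B_{2^{k−2}}` as above, the game
matrix `𝒢_{2^k}` equals the 4×4 block matrix (blocks of size `q × q`)
`[[A,G,G,B],[G,A,B,G],[G,B,A,G],[B,G,G,A]]`. -/
theorem stmt_15 (m : ℕ) :
    gameMatrix (m + 4) =
      blk
        (blk (Amat (m + 2) (m + 2) le_rfl) (gameMatrix (m + 2))
          (gameMatrix (m + 2)) (Amat (m + 2) (m + 2) le_rfl))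
        (blk (gameMatrix (m + 2)) (Bmat (m + 2) (m + 2) le_rfl)
          (Bmat (m + 2) (m + 2) le_rfl) (gameMatrix (m + 2)))
        (blk (gameMatrix (m + 2)) (Bmat (m + 2) (m + 2) le_rfl)
          (Bmat (m + 2) (m + 2) le_rfl) (gameMatrix (m + 2)))
        (blk (Amat (m + 2) (m + 2) le_rfl) (gameMatrix (m + 2))
          (gameMatrix (m + 2)) (Amat (m + 2) (m + 2) le_rfl)) := by
  ext i j
  obtain ⟨s, rfl⟩ := (finPowEquiv (m + 3)).surjective i
  obtain ⟨t, rfl⟩ := (finPowEquiv (m + 3)).surjective j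
  rcases s with i' | i' <;> rcases t with j' | j' <;>
      obtain ⟨u, rfl⟩ := (finPowEquiv (m + 2)).surjective i' <;>
      obtain ⟨v, rfl⟩ := (finPowEquiv (m + 2)).surjective j' <;>
      rcases u with a | a <;> rcases v with b | b <;>
      simp only [blk_apply, Matrix.fromBlocks_apply₁₁, Matrix.fromBlocks_apply₁₂,
        Matrix.fromBlocks_apply₂₁, Matrix.fromBlocks_apply₂₂, gm_apply,
        finPowEquiv_inl_val, finPowEquiv_inr_val]
  · refine quadA (m + 2) (m + 4) a b 0 0 _ _ (by norm_num) ?_ ?_ Ssum2_00 <;> ring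
  · refine quadG (m + 2) (m + 4) a b 0 1 _ _ (by norm_num) ?_ ?_ Ssum2_01 <;> ring
  · refine quadG (m + 2) (m + 4) a b 1 0 _ _ (by norm_num) ?_ ?_ Ssum2_10 <;> ring
  · refine quadA (m + 2) (m + 4) a b 1 1 _ _ (by norm_num) ?_ ?_ Ssum2_11 <;> ring
  · refine quadG (m + 2) (m + 4) a b 0 2 _ _ (by norm_num) ?_ ?_ Ssum2_02 <;> ring
  · refine quadB (m + 2) (m + 4) a b 0 3 _ _ (by norm_num) ?_ ?_ Ssum2_03 <;> ring
  · refine quadB (m + 2) (m + 4) a b 1 2 _ _ (by norm_num) ?_ ?_ Ssum2_12 <;> ring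
  · refine quadG (m + 2) (m + 4) a b 1 3 _ _ (by norm_num) ?_ ?_ Ssum2_13 <;> ring
  · refine quadG (m + 2) (m + 4) a b 2 0 _ _ (by norm_num) ?_ ?_ Ssum2_20 <;> ring
  · refine quadB (m + 2) (m + 4) a b 2 1 _ _ (by norm_num) ?_ ?_ Ssum2_21 <;> ring
  · refine quadB (m + 2) (m + 4) a b 3 0 _ _ (by norm_num) ?_ ?_ Ssum2_30 <;> ring
  · refine quadG (m + 2) (m + 4) a b 3 1 _ _ (by norm_num) ?_ ?_ Ssum2_31 <;> ring
  · refine quadA (m + 2) (m + 4) a b 2 2 _ _ (by norm_num) ?_ ?_ Ssum2_22 <;> ring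
  · refine quadG (m + 2) (m + 4) a b 2 3 _ _ (by norm_num) ?_ ?_ Ssum2_23 <;> ring
  · refine quadG (m + 2) (m + 4) a b 3 2 _ _ (by norm_num) ?_ ?_ Ssum2_32 <;> ring
  · refine quadA (m + 2) (m + 4) a b 3 3 _ _ (by norm_num) ?_ ?_ Ssum2_33 <;> ring
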